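/- Let s, b, q and n be integers with s ≥ 2, b ≥ 2, q ≥ 3, n ≥ 1 satisfying n·s^n = b·(b^{q−2} + b^{q−3} + ⋯ + b + 1). Then (1 + log₂(s))·n > q. -/
import Mathlib

lemma two_mul_le_two_pow' (n : ℕ) (hn : 1 ≤ n) : 2 * n ≤ 2 ^ n := by
  induction n with
  | zero => omega
  | succ m ih =>
    rcases Nat.lt_or_ge m 1 with h | h
    · interval_cases m; norm_num
    · have h1 := ih h
      have h2 : 2 ≤ 2 ^ m := by omega
      rw [pow_succ]; omega

theorem log_bound_on_q (s b q n : ℕ) (hs : 2 ≤ s) (hb : 2 ≤ b) (hq : 3 ≤ q) (hn : 1 ≤ n)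
    (heq : n * s ^ n = b * ∑ j ∈ Finset.range (q - 1), b ^ j) :
    (1 + Real.logb 2 s) * n > q := by
  have hsub : ({0, q-2} : Finset ℕ) ⊆ Finset.range (q - 1) := by
    intro x hx
    simp only [Finset.mem_insert, Finset.mem_singleton] at hx
    rcases hx with rfl | rfl <;> simp [Finset.mem_range] <;> omega
  have hpair : ∑ j ∈ ({0, q-2} : Finset ℕ), b ^ j = 1 + b ^ (q-2) := by
    rw [Finset.sum_pair (by omega)]; simp
  have hsum : 1 + b ^ (q-2) ≤ ∑ j ∈ Finset.range (q - 1), b ^ j := by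
    rw [← hpair]
    exact Finset.sum_le_sum_of_subset hsub
  have hbq : 2 ^ (q-1) + 2 ≤ n * s ^ n := by
    have h1 : b * (1 + b ^ (q-2)) ≤ n * s ^ n := by
      rw [heq]; exact Nat.mul_le_mul_left b hsum
    have h2 : 2 ^ (q-1) ≤ b * b ^ (q-2) := by
      calc 2 ^ (q-1) = 2 * 2 ^ (q-2) := by rw [← pow_succ']; congr 1; omega
      _ ≤ b * b ^ (q-2) := Nat.mul_le_mul hb (Nat.pow_le_pow_left hb _)
    calc 2 ^ (q-1) + 2 ≤ b * b ^ (q-2) + b := by omega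
    _ = b * (1 + b ^ (q-2)) := by ring
    _ ≤ n * s ^ n := h1
  have hkey : 2 ^ q < (2 * s) ^ n := by
    calc 2 ^ q = 2 * 2 ^ (q-1) := by rw [← pow_succ']; congr 1; omega
    _ < 2 * (2 ^ (q-1) + 2) := by omega
    _ ≤ 2 * (n * s ^ n) := Nat.mul_le_mul_left 2 hbq
    _ = (2 * n) * s ^ n := by ring
    _ ≤ 2 ^ n * s ^ n := Nat.mul_le_mul_right _ (two_mul_le_two_pow' n hn)
    _ = (2 * s) ^ n := (mul_pow 2 s n).symm
  have hkeyR : (2:ℝ) ^ q < (2 * (s:ℝ)) ^ n := by exact_mod_cast hkey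
  have hsR : (2:ℝ) ≤ (s:ℝ) := by exact_mod_cast hs
  have hlog := Real.logb_lt_logb (by norm_num : (1:ℝ) < 2) (by positivity) hkeyR
  rw [Real.logb_pow, Real.logb_pow, Real.logb_mul (by norm_num) (by positivity),
    show Real.logb 2 2 = 1 from by simp] at hlog
  calc (q:ℝ) = q * 1 := by ring
  _ < n * (1 + Real.logb 2 s) := by simpa using hlog
  _ = (1 + Real.logb 2 s) * n := by ring
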